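/- Let G ≤ Aut(T) be a self-similar strongly fractal group and let B = Bas_s(G) for some s ≥ 1. Let ω be a group word that is a law in G (i.e. the verbal subgroup ω(G) is trivial) but is not a law in B. Then B is weakly regular branch over the verbal subgroup ω(B). -/

import Mathlib

/-!
Groups of automorphisms of the `m`-regular rooted tree, encoded via portraits:
an automorphism is determined by the family of its labels (local actions)
`label : List (Fin m) → Equiv.Perm (Fin m)`.
-/

namespace Basilica

/-- An automorphism of the `m`-regular rooted tree, given by its portrait. -/
structure TreeAut (m : ℕ) where
  label : List (Fin m) → Equiv.Perm (Fin m)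

namespace TreeAut

variable {m : ℕ}

lemma ext_label {a b : TreeAut m} (h : ∀ u, a.label u = b.label u) : a = b := by
  cases a
  cases b
  simp only [mk.injEq]
  exact funext h

/-- The section of an automorphism at a vertex. -/
def sec (a : TreeAut m) (v : List (Fin m)) : TreeAut m := ⟨fun u => a.label (v ++ u)⟩

@[simp] lemma sec_label (a : TreeAut m) (v u : List (Fin m)) :
    (a.sec v).label u = a.label (v ++ u) := rfl

@[simp] lemma sec_nil (a : TreeAut m) : a.sec [] = a := rfl

lemma sec_sec (a : TreeAut m) (v w : List (Fin m)) : (a.sec v).sec w = a.sec (v ++ w) :=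
  ext_label fun u => by simp [List.append_assoc]

/-- The action of a tree automorphism on the vertices (finite words). -/
def apply : TreeAut m → List (Fin m) → List (Fin m)
  | _, [] => []
  | a, x :: u => a.label [] x :: (a.sec [x]).apply u

/-- The inverse action of a tree automorphism on the vertices. -/
def invApply : TreeAut m → List (Fin m) → List (Fin m)
  | _, [] => []
  | a, x :: u => (a.label [])⁻¹ x :: (a.sec [(a.label [])⁻¹ x]).invApply u

instance : One (TreeAut m) := ⟨⟨fun _ => 1⟩⟩
instance : Mul (TreeAut m) := ⟨fun a b => ⟨fun u => a.label (b.apply u) * b.label u⟩⟩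
instance : Inv (TreeAut m) := ⟨fun a => ⟨fun u => (a.label (a.invApply u))⁻¹⟩⟩

@[simp] lemma one_label (u : List (Fin m)) : (1 : TreeAut m).label u = 1 := rfl

@[simp] lemma mul_label (a b : TreeAut m) (u : List (Fin m)) :
    (a * b).label u = a.label (b.apply u) * b.label u := rfl

@[simp] lemma inv_label (a : TreeAut m) (u : List (Fin m)) :
    a⁻¹.label u = (a.label (a.invApply u))⁻¹ := rfl

@[simp] lemma one_sec (v : List (Fin m)) : (1 : TreeAut m).sec v = 1 := rfl

@[simp] lemma apply_nil (a : TreeAut m) : a.apply [] = [] := rfl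

lemma apply_cons (a : TreeAut m) (x : Fin m) (u : List (Fin m)) :
    a.apply (x :: u) = a.label [] x :: (a.sec [x]).apply u := rfl

@[simp] lemma one_apply (u : List (Fin m)) : (1 : TreeAut m).apply u = u := by
  induction u with
  | nil => rfl
  | cons x u ih => simp [apply_cons, ih]

lemma apply_append (a : TreeAut m) (v u : List (Fin m)) :
    a.apply (v ++ u) = a.apply v ++ (a.sec v).apply u := by
  induction v generalizing a with
  | nil => simp
  | cons x v ih =>
      simp only [List.cons_append, apply_cons, ih, sec_sec, List.singleton_append,
        List.nil_append]

lemma mul_sec (a b : TreeAut m) (v : List (Fin m)) :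
    (a * b).sec v = a.sec (b.apply v) * b.sec v :=
  ext_label fun u => by simp [apply_append]

lemma mul_apply (a b : TreeAut m) (u : List (Fin m)) :
    (a * b).apply u = a.apply (b.apply u) := by
  induction u generalizing a b with
  | nil => rfl
  | cons x u ih =>
      rw [apply_cons, mul_sec, ih]
      simp [apply_cons, Equiv.Perm.mul_apply]

lemma invApply_apply (a : TreeAut m) (u : List (Fin m)) : a.invApply (a.apply u) = u := by
  induction u generalizing a with
  | nil => rfl
  | cons x u ih => simp [apply_cons, invApply, ih]

lemma apply_invApply (a : TreeAut m) (u : List (Fin m)) : a.apply (a.invApply u) = u := by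
  induction u generalizing a with
  | nil => rfl
  | cons x u ih => simp [invApply, apply_cons, ih]

instance : Group (TreeAut m) where
  mul_assoc a b c := ext_label fun u => by simp [mul_apply, mul_assoc]
  one_mul a := ext_label fun u => by simp
  mul_one a := ext_label fun u => by simp
  inv_mul_cancel a := ext_label fun u => by simp [invApply_apply]

lemma apply_injective (a : TreeAut m) : Function.Injective a.apply := by
  intro x y h
  have hx := invApply_apply a x
  rw [h, invApply_apply] at hx
  exact hx.symm

@[simp] lemma apply_length (a : TreeAut m) (u : List (Fin m)) :
    (a.apply u).length = u.length := by
  induction u generalizing a with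
  | nil => rfl
  | cons x u ih => simp [apply_cons, ih]

/-- `cons ρ f` is `ρ · ψ₁⁻¹(f 0, …, f (m-1))`: the automorphism with root label `ρ`
and first-layer sections `f x`. -/
def cons (ρ : Equiv.Perm (Fin m)) (f : Fin m → TreeAut m) : TreeAut m :=
  ⟨fun u =>
    match u with
    | [] => ρ
    | x :: v => (f x).label v⟩

end TreeAut

variable {m : ℕ}

/-- The `n`-th layer stabiliser `St_G(n)` of a group `G` of tree automorphisms. -/
def layerStab (G : Subgroup (TreeAut m)) (n : ℕ) : Subgroup (TreeAut m) where
  carrier := {g | g ∈ G ∧ ∀ u : List (Fin m), u.length = n → g.apply u = u}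
  one_mem' := ⟨G.one_mem, fun u _ => TreeAut.one_apply u⟩
  mul_mem' := by
    rintro a b ⟨haG, ha⟩ ⟨hbG, hb⟩
    refine ⟨G.mul_mem haG hbG, fun u hu => ?_⟩
    rw [TreeAut.mul_apply, hb u hu, ha u hu]
  inv_mem' := by
    rintro a ⟨haG, ha⟩
    refine ⟨G.inv_mem haG, fun u hu => ?_⟩
    apply TreeAut.apply_injective a
    rw [← TreeAut.mul_apply, mul_inv_cancel, TreeAut.one_apply, ha u hu]

/-- A group of tree automorphisms acts spherically transitively if it acts
transitively on every layer. -/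
def SphericallyTransitive (G : Subgroup (TreeAut m)) : Prop :=
  ∀ u v : List (Fin m), u.length = v.length → ∃ g ∈ G, g.apply u = v

/-- A group of tree automorphisms is self-similar if it is closed under sections. -/
def SelfSimilar (G : Subgroup (TreeAut m)) : Prop :=
  ∀ g ∈ G, ∀ v : List (Fin m), g.sec v ∈ G

/-- A spherically transitive group is fractal if `st_G(u)|_u = G` for all vertices `u`. -/
def Fractal (G : Subgroup (TreeAut m)) : Prop :=
  SphericallyTransitive G ∧
    ∀ u : List (Fin m),
      {h : TreeAut m | ∃ g ∈ G, g.apply u = u ∧ g.sec u = h} = (G : Set (TreeAut m))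

/-- A spherically transitive group is strongly fractal if `St_G(1)|_x = G` for all `x ∈ X`. -/
def StronglyFractal (G : Subgroup (TreeAut m)) : Prop :=
  SphericallyTransitive G ∧
    ∀ x : Fin m,
      {h : TreeAut m | ∃ g ∈ layerStab G 1, g.sec [x] = h} = (G : Set (TreeAut m))

/-- A spherically transitive group is very strongly fractal if
`St_G(n+1)|_x = St_G(n)` for all `n` and `x ∈ X`. -/
def VeryStronglyFractal (G : Subgroup (TreeAut m)) : Prop :=
  SphericallyTransitive G ∧
    ∀ (n : ℕ) (x : Fin m),
      {h : TreeAut m | ∃ g ∈ layerStab G (n + 1), g.sec [x] = h}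
        = (layerStab G n : Set (TreeAut m))

/-- A group of tree automorphisms is contracting if it has a finite nucleus. -/
def Contracting (G : Subgroup (TreeAut m)) : Prop :=
  ∃ N : Set (TreeAut m), N.Finite ∧ N ⊆ (G : Set (TreeAut m)) ∧
    ∀ g ∈ G, ∃ k : ℕ, ∀ v : List (Fin m), k < v.length → g.sec v ∈ N

/-- A tree automorphism is finite-state if it has finitely many distinct sections. -/
def FiniteState (f : TreeAut m) : Prop :=
  {h : TreeAut m | ∃ u : List (Fin m), f.sec u = h}.Finite

/-- A tree automorphism is bounded if the number of nontrivial sections at the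
`n`-th layer is bounded uniformly in `n`. -/
def BoundedAut (f : TreeAut m) : Prop :=
  ∃ C : ℕ, ∀ n : ℕ, {u : List (Fin m) | u.length = n ∧ f.sec u ≠ 1}.ncard ≤ C

/-- The `n`-th rigid layer stabiliser: the subgroup generated by the rigid vertex
stabilisers of the vertices of the `n`-th layer. -/
def rigidLayerStab (G : Subgroup (TreeAut m)) (n : ℕ) : Subgroup (TreeAut m) :=
  Subgroup.closure {g | g ∈ G ∧ ∃ v : List (Fin m), v.length = n ∧
    ∀ u : List (Fin m), ¬ v <+: u → g.apply u = u}

/-- A weakly branch group: spherically transitive with nontrivial rigid layer stabilisers. -/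
def WeaklyBranch (G : Subgroup (TreeAut m)) : Prop :=
  SphericallyTransitive G ∧ ∀ n : ℕ, rigidLayerStab G n ≠ ⊥

/-- `H` is weakly regular branch over `K ≤ H` if `ψ₁(St_K(1)) ⊇ K × ⋯ × K`. -/
def WeaklyRegularBranchOver (H K : Subgroup (TreeAut m)) : Prop :=
  K ≤ H ∧ ∀ f : Fin m → TreeAut m, (∀ x, f x ∈ K) → TreeAut.cons 1 f ∈ K

/-- The portrait of the `i`-th Basilica monomorphism `β^s_i` applied to `g`,
computed by recursion over vertices. -/
def betaLabel [NeZero m] (s : ℕ) : List (Fin m) → ℕ → TreeAut m → Equiv.Perm (Fin m)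
  | [], i, g => if i = 0 then g.label [] else 1
  | x :: u, i, g =>
      if i = 0 then betaLabel s u (s - 1) (g.sec [x])
      else if x = 0 then betaLabel s u (i - 1) g else 1

/-- The Basilica monomorphism `β^s_i : Aut(T) → Aut(T)`, satisfying
`β_i(g) = ψ₁⁻¹(β_{i-1}(g), 1, …, 1)` for `1 ≤ i ≤ s-1` and
`β_0(g) = g|^ε · ψ₁⁻¹(β_{s-1}(g|_0), …, β_{s-1}(g|_{m-1}))`. -/
def betaAut [NeZero m] (s i : ℕ) (g : TreeAut m) : TreeAut m := ⟨fun u => betaLabel s u i g⟩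

/-- The `s`-th Basilica group of `G`. -/
def basilica [NeZero m] (s : ℕ) (G : Subgroup (TreeAut m)) : Subgroup (TreeAut m) :=
  Subgroup.closure {b | ∃ g ∈ G, ∃ i < s, b = betaAut s i g}

/-- The subgroup `S_i = ⟨β_j(G) : j ≠ i⟩` of the `s`-th Basilica group. -/
def Ssub [NeZero m] (s i : ℕ) (G : Subgroup (TreeAut m)) : Subgroup (TreeAut m) :=
  Subgroup.closure {b | ∃ g ∈ G, ∃ j < s, j ≠ i ∧ b = betaAut s j g}

/-- The normal closure `N_i` of `S_i` in the `s`-th Basilica group of `G`. -/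
def Nsub [NeZero m] (s i : ℕ) (G : Subgroup (TreeAut m)) : Subgroup (TreeAut m) :=
  Subgroup.closure {x | ∃ b ∈ basilica s G, ∃ y ∈ Ssub s i G, x = b * y * b⁻¹}

/-- The `i`-th splitting kernel `K_i = β_i⁻¹(β_i(G) ∩ N_i)` of `G`, as a set. -/
def Kset [NeZero m] (s i : ℕ) (G : Subgroup (TreeAut m)) : Set (TreeAut m) :=
  {g | g ∈ G ∧ betaAut s i g ∈ Nsub s i G}

/-- The portrait of the monomorphism `π_i` (for the `d`-fold diagonal construction). -/
def piLabel (d : ℕ) : List (Fin m) → ℕ → TreeAut m → Equiv.Perm (Fin m)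
  | [], i, g => if i = 0 then g.label [] else 1
  | x :: u, i, g =>
      if i = 0 then piLabel d u (d - 1) (g.sec [x])
      else piLabel d u (i - 1) g

/-- The monomorphism `π_i : Aut(T) → Aut(T)`, satisfying
`π_0(g) = g|^ε · ψ₁⁻¹(π_{d-1}(g|_0), …, π_{d-1}(g|_{m-1}))` and
`π_i(g) = ψ₁⁻¹(π_{i-1}(g), …, π_{i-1}(g))` for `1 ≤ i ≤ d-1`. -/
def piAut (d i : ℕ) (g : TreeAut m) : TreeAut m := ⟨fun u => piLabel d u i g⟩

/-- The generator of the `m`-adic odometer: `a = σ · ψ₁⁻¹(a, 1, …, 1)` with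
`σ = (0 1 … m-1)`. -/
def odometer (m : ℕ) [NeZero m] : TreeAut m :=
  ⟨fun u => if ∀ x ∈ u, x = 0 then finRotate m else 1⟩

/-- The group `O_m^d = D_d(O_m) = ⟨π_i(a) : 0 ≤ i ≤ d-1⟩`. -/
def OdPow (m d : ℕ) [NeZero m] : Subgroup (TreeAut m) :=
  Subgroup.closure {x | ∃ i < d, x = piAut d i (odometer m)}

/-- The group `Γ` of all automorphisms all of whose labels are powers of the
cycle `σ = (0 1 … m-1)`. -/
def Gamma (m : ℕ) : Subgroup (TreeAut m) where
  carrier := {g | ∀ u : List (Fin m), g.label u ∈ Subgroup.zpowers (finRotate m)}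
  one_mem' := by
    intro u
    rw [TreeAut.one_label]
    exact one_mem _
  mul_mem' := by
    intro a b ha hb u
    rw [TreeAut.mul_label]
    exact mul_mem (ha _) (hb _)
  inv_mem' := by
    intro a ha u
    rw [TreeAut.inv_label]
    exact inv_mem (ha _)

/-- The Hausdorff dimension of `G ≤ Γ` relative to `Γ`. -/
noncomputable def hdim (m : ℕ) (G : Subgroup (TreeAut m)) : ℝ :=
  Filter.liminf (fun n : ℕ =>
    Real.logb m ((layerStab G n).relIndex G) /
      Real.logb m ((layerStab (Gamma m) n).relIndex (Gamma m))) Filter.atTop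

/-- The series of obstructions `o_G(n) = m·log_m|L_G(n-1)| - log_m|L_G(n)|` (for `n ≥ 1`),
where `L_G(n) = St_G(n)/St_G(n+1)`. -/
noncomputable def obstruction (m : ℕ) (G : Subgroup (TreeAut m)) (n : ℕ) : ℝ :=
  m * Real.logb m ((layerStab G n).relIndex (layerStab G (n - 1)))
    - Real.logb m ((layerStab G (n + 1)).relIndex (layerStab G n))

/-- The permutation group induced by `G` on the first layer acts regularly on `X`. -/
def RegularRootAction (G : Subgroup (TreeAut m)) : Prop :=
  (∀ x y : Fin m, ∃ g ∈ G, g.label [] x = y) ∧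
    ∀ g ∈ G, ∀ x : Fin m, g.label [] x = x → g.label [] = 1



/-! ### Auxiliary lemmas -/

namespace TreeAut

variable {m : ℕ}

lemma apply_singleton (a : TreeAut m) (x : Fin m) : a.apply [x] = [a.label [] x] := rfl

lemma inv_label_nil (a : TreeAut m) : a⁻¹.label [] = (a.label [])⁻¹ := rfl

lemma mul_label_nil (a b : TreeAut m) : (a * b).label [] = a.label [] * b.label [] := by
  simp

lemma sec_singleton_mul (a b : TreeAut m) (hb : b.label [] = 1) (x : Fin m) :
    (a * b).sec [x] = a.sec [x] * b.sec [x] := by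
  rw [mul_sec, apply_singleton, hb]
  rfl

lemma inv_sec_label (a : TreeAut m) (z : Fin m) :
    a⁻¹.sec [a.label [] z] = (a.sec [z])⁻¹ := by
  have h1 : a⁻¹.apply [a.label [] z] = [z] := by
    rw [apply_singleton, inv_label_nil]
    simp
  have h2 : (a * a⁻¹).sec [a.label [] z] = a.sec [z] * a⁻¹.sec [a.label [] z] := by
    rw [mul_sec, h1]
  rw [mul_inv_cancel] at h2
  have : (1 : TreeAut m) = a.sec [z] * a⁻¹.sec [a.label [] z] := by
    rw [← h2]; rfl
  rw [eq_comm, ← eq_inv_mul_iff_mul_eq] at this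
  rw [this, mul_one]

lemma inv_apply_label (a : TreeAut m) (z : Fin m) :
    a⁻¹.apply [a.label [] z] = [z] := by
  rw [apply_singleton, inv_label_nil]
  simp

lemma eq_of_label_nil_sec {a b : TreeAut m} (h0 : a.label [] = b.label [])
    (h1 : ∀ x : Fin m, a.sec [x] = b.sec [x]) : a = b := by
  apply ext_label
  intro u
  match u with
  | [] => exact h0
  | x :: v =>
      have := congrArg (fun c => TreeAut.label c v) (h1 x)
      simpa using this

@[simp] lemma cons_label_nil (ρ : Equiv.Perm (Fin m)) (f : Fin m → TreeAut m) :
    (cons ρ f).label [] = ρ := rfl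

@[simp] lemma cons_sec (ρ : Equiv.Perm (Fin m)) (f : Fin m → TreeAut m) (x : Fin m) :
    (cons ρ f).sec [x] = f x := rfl

lemma cons_one_one : cons (1 : Equiv.Perm (Fin m)) (fun _ => (1 : TreeAut m)) = 1 :=
  eq_of_label_nil_sec rfl (fun _ => rfl)

lemma cons_one_mul (f g : Fin m → TreeAut m) :
    cons 1 f * cons 1 g = cons 1 (fun y => f y * g y) := by
  apply eq_of_label_nil_sec
  · rw [mul_label_nil]; simp
  · intro x
    rw [sec_singleton_mul _ _ (cons_label_nil 1 g) x]
    simp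

end TreeAut

/-- The subgroup of automorphisms with trivial root label. -/
def rootTriv (m : ℕ) : Subgroup (TreeAut m) where
  carrier := {a | a.label [] = 1}
  one_mem' := rfl
  mul_mem' := by
    intro a b ha hb
    simp only [Set.mem_setOf_eq] at *
    rw [TreeAut.mul_label_nil, ha, hb, one_mul]
  inv_mem' := by
    intro a ha
    simp only [Set.mem_setOf_eq] at *
    rw [TreeAut.inv_label_nil, ha, inv_one]

/-- Taking the section at a first-layer vertex is a homomorphism on `rootTriv`. -/
def secHom {m : ℕ} (x : Fin m) : rootTriv m →* TreeAut m where
  toFun a := (a : TreeAut m).sec [x]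
  map_one' := rfl
  map_mul' a b := TreeAut.sec_singleton_mul _ _ b.2 x

lemma free_lift_mem {H : Type*} [Group H] {k : ℕ} (K : Subgroup H)
    (f : Fin k → H) (hf : ∀ t, f t ∈ K) (w : FreeGroup (Fin k)) :
    FreeGroup.lift f w ∈ K := by
  induction w using FreeGroup.induction_on with
  | C1 => simp [K.one_mem]
  | of t =>
      show FreeGroup.lift f (FreeGroup.of t) ∈ K
      simpa using hf t
  | inv_of t _ =>
      simp only [map_inv]
      refine K.inv_mem ?_
      show FreeGroup.lift f (FreeGroup.of t) ∈ K
      simpa using hf t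
  | mul a b ha hb => rw [map_mul]; exact K.mul_mem ha hb

lemma hom_free_lift {H H' : Type*} [Group H] [Group H'] (φ : H →* H') {k : ℕ}
    (f : Fin k → H) (w : FreeGroup (Fin k)) :
    φ (FreeGroup.lift f w) = FreeGroup.lift (fun t => φ (f t)) w := by
  have : φ.comp (FreeGroup.lift f) = FreeGroup.lift (fun t => φ (f t)) := by
    ext t
    simp
  calc φ (FreeGroup.lift f w) = φ.comp (FreeGroup.lift f) w := rfl
  _ = FreeGroup.lift (fun t => φ (f t)) w := by rw [this]


section Beta

variable {m : ℕ} [NeZero m]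

lemma betaLabel_nil (s i : ℕ) (g : TreeAut m) :
    betaLabel s ([] : List (Fin m)) i g = if i = 0 then g.label [] else 1 := rfl

lemma betaLabel_cons (s i : ℕ) (g : TreeAut m) (x : Fin m) (u : List (Fin m)) :
    betaLabel s (x :: u) i g =
      if i = 0 then betaLabel s u (s - 1) (g.sec [x])
      else if x = 0 then betaLabel s u (i - 1) g else 1 := rfl

lemma betaAut_label_nil_zero (s : ℕ) (g : TreeAut m) :
    (betaAut s 0 g).label [] = g.label [] := rfl

lemma betaAut_label_nil_pos (s : ℕ) {i : ℕ} (hi : i ≠ 0) (g : TreeAut m) :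
    (betaAut s i g).label [] = 1 := by
  show betaLabel s ([] : List (Fin m)) i g = 1
  rw [betaLabel_nil, if_neg hi]

lemma betaAut_sec_zero (s : ℕ) (g : TreeAut m) (x : Fin m) :
    (betaAut s 0 g).sec [x] = betaAut s (s - 1) (g.sec [x]) :=
  TreeAut.ext_label fun u => by
    show betaLabel s (x :: u) 0 g = _
    rw [betaLabel_cons, if_pos rfl]
    rfl

lemma betaAut_sec_pos (s : ℕ) {i : ℕ} (hi : i ≠ 0) (g : TreeAut m) (x : Fin m) :
    (betaAut s i g).sec [x] = if x = 0 then betaAut s (i - 1) g else 1 :=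
  TreeAut.ext_label fun u => by
    show betaLabel s (x :: u) i g = _
    rw [betaLabel_cons, if_neg hi]
    split_ifs with hx
    · rfl
    · rfl

lemma betaLabel_one (s : ℕ) (u : List (Fin m)) (i : ℕ) :
    betaLabel s u i (1 : TreeAut m) = 1 := by
  induction u generalizing i with
  | nil => rw [betaLabel_nil]; split_ifs <;> rfl
  | cons x u ih =>
      rw [betaLabel_cons]
      split_ifs with h1 h2
      · rw [TreeAut.one_sec]; exact ih _
      · exact ih _
      · rfl

lemma betaAut_one (s i : ℕ) : betaAut s i (1 : TreeAut m) = 1 :=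
  TreeAut.ext_label fun u => betaLabel_one s u i

lemma betaLabel_mul (s : ℕ) (u : List (Fin m)) (i : ℕ) (g h : TreeAut m) :
    betaLabel s u i (g * h) =
      betaLabel s ((betaAut s i h).apply u) i g * betaLabel s u i h := by
  induction u generalizing i g h with
  | nil =>
      simp only [TreeAut.apply_nil, betaLabel_nil]
      split_ifs
      · simp
      · rw [one_mul]
  | cons x u ih =>
      rw [TreeAut.apply_cons]
      by_cases hi : i = 0
      · subst hi
        rw [betaAut_sec_zero, betaLabel_cons, if_pos rfl, TreeAut.mul_sec,
          TreeAut.apply_singleton, ih]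
        show _ = betaLabel s (_ :: _) 0 g * betaLabel s (x :: u) 0 h
        rw [betaLabel_cons (i := 0), if_pos rfl, betaLabel_cons (i := 0), if_pos rfl]
        rfl
      · rw [betaAut_sec_pos s hi, betaAut_label_nil_pos s hi]
        by_cases hx : x = 0
        · subst hx
          rw [if_pos rfl, betaLabel_cons, if_neg hi, if_pos rfl, ih]
          show _ = betaLabel s (_ :: _) i g * betaLabel s (0 :: u) i h
          rw [betaLabel_cons (i := i), if_neg hi, betaLabel_cons (i := i), if_neg hi]
          simp
        · rw [if_neg hx, betaLabel_cons, if_neg hi, if_neg hx, TreeAut.one_apply]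
          show (1 : Equiv.Perm (Fin m)) = betaLabel s (_ :: _) i g * betaLabel s (x :: u) i h
          rw [betaLabel_cons (i := i), if_neg hi, betaLabel_cons (i := i), if_neg hi]
          simp [hx]

/-- The Basilica monomorphism as a `MonoidHom`. -/
def betaHom (s i : ℕ) : TreeAut m →* TreeAut m where
  toFun := betaAut s i
  map_one' := betaAut_one s i
  map_mul' g h := TreeAut.ext_label fun u => by
    rw [TreeAut.mul_label]
    exact betaLabel_mul s u i g h

lemma betaHom_apply (s i : ℕ) (g : TreeAut m) : betaHom s i g = betaAut s i g := rfl

end Beta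


section Key

variable {m : ℕ} [NeZero m]

lemma conj_label_nil (a c : TreeAut m) (hc : c.label [] = 1) :
    (a * c * a⁻¹).label [] = 1 := by
  rw [TreeAut.mul_label_nil, TreeAut.mul_label_nil, hc, mul_one, TreeAut.inv_label_nil,
    mul_inv_cancel]

lemma conj_sec (a c : TreeAut m) (hc : c.label [] = 1) (z : Fin m) :
    (a * c * a⁻¹).sec [a.label [] z] = a.sec [z] * c.sec [z] * (a.sec [z])⁻¹ := by
  rw [mul_assoc, TreeAut.mul_sec, TreeAut.mul_apply, TreeAut.inv_apply_label,
    TreeAut.apply_singleton, hc, Equiv.Perm.one_apply, TreeAut.mul_sec,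
    TreeAut.inv_apply_label, TreeAut.inv_sec_label, mul_assoc]

/-- Membership in `layerStab G 1` forces the root label to be trivial. -/
lemma label_nil_of_layerStab {G : Subgroup (TreeAut m)} {g : TreeAut m}
    (hg : g ∈ layerStab G 1) : g.label [] = 1 := by
  ext y
  have := hg.2 [y] rfl
  rw [TreeAut.apply_singleton] at this
  exact congrArg Fin.val (List.head_eq_of_cons_eq this)

/-- Key lemma: every element of the Basilica group is the section at `x` of an element
of `St(1) ∩ Bas_s(G)` whose other first-layer sections lie in `β_{s-1}(G)`. -/
lemma exists_good_section (G : Subgroup (TreeAut m)) (hss : SelfSimilar G)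
    (hsf : StronglyFractal G) (s : ℕ) (hs : 1 ≤ s) (x : Fin m) :
    ∀ b ∈ basilica s G, ∃ c : TreeAut m, c ∈ basilica s G ∧ c.label [] = 1 ∧
      c.sec [x] = b ∧ ∀ y : Fin m, y ≠ x → ∃ q ∈ G, c.sec [y] = betaAut s (s - 1) q := by
  -- the set of achievable sections is a subgroup
  set P : Subgroup (TreeAut m) :=
    { carrier := {b | ∃ c : TreeAut m, c ∈ basilica s G ∧ c.label [] = 1 ∧
        c.sec [x] = b ∧ ∀ y : Fin m, y ≠ x → ∃ q ∈ G, c.sec [y] = betaAut s (s - 1) q}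
      one_mem' := ⟨1, (basilica s G).one_mem, rfl, rfl,
        fun y _ => ⟨1, G.one_mem, by rw [betaAut_one]; rfl⟩⟩
      mul_mem' := by
        rintro b₁ b₂ ⟨c₁, hc₁B, hc₁l, hc₁s, hc₁o⟩ ⟨c₂, hc₂B, hc₂l, hc₂s, hc₂o⟩
        refine ⟨c₁ * c₂, (basilica s G).mul_mem hc₁B hc₂B, ?_, ?_, ?_⟩
        · rw [TreeAut.mul_label_nil, hc₁l, hc₂l, one_mul]
        · rw [TreeAut.sec_singleton_mul _ _ hc₂l, hc₁s, hc₂s]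
        · intro y hy
          obtain ⟨q₁, hq₁, he₁⟩ := hc₁o y hy
          obtain ⟨q₂, hq₂, he₂⟩ := hc₂o y hy
          exact ⟨q₁ * q₂, G.mul_mem hq₁ hq₂, by
            rw [TreeAut.sec_singleton_mul _ _ hc₂l, he₁, he₂,
              ← betaHom_apply, ← betaHom_apply, ← betaHom_apply, map_mul]⟩
      inv_mem' := by
        rintro b ⟨c, hcB, hcl, hcs, hco⟩
        have hinvl : c⁻¹.label [] = 1 := by rw [TreeAut.inv_label_nil, hcl, inv_one]
        have hsec : ∀ z : Fin m, c⁻¹.sec [z] = (c.sec [z])⁻¹ := by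
          intro z
          have := TreeAut.inv_sec_label c z
          rwa [hcl, Equiv.Perm.one_apply] at this
        refine ⟨c⁻¹, (basilica s G).inv_mem hcB, hinvl, by rw [hsec, hcs], ?_⟩
        intro y hy
        obtain ⟨q, hq, he⟩ := hco y hy
        exact ⟨q⁻¹, G.inv_mem hq, by
          rw [hsec, he, ← betaHom_apply, ← betaHom_apply, map_inv]⟩ }
  -- β_{s-1}(G) ⊆ P, via β_0 of layer-stabiliser elements
  have hQ : ∀ g ∈ G, betaAut s (s - 1) g ∈ P := by
    intro g hg
    have hmem : g ∈ {h : TreeAut m | ∃ g' ∈ layerStab G 1, g'.sec [x] = h} := by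
      rw [hsf.2 x]; exact hg
    obtain ⟨g', hg', hgs⟩ := hmem
    refine ⟨betaAut s 0 g', Subgroup.subset_closure ⟨g', hg'.1, 0, hs, rfl⟩, ?_, ?_, ?_⟩
    · rw [betaAut_label_nil_zero]
      exact label_nil_of_layerStab hg'
    · rw [betaAut_sec_zero, hgs]
    · intro y _
      exact ⟨g'.sec [y], hss g' hg'.1 [y], (betaAut_sec_zero s g' y).symm⟩
  -- all generators of the Basilica group lie in P
  have hgen : ∀ b ∈ basilica s G, b ∈ P := by
    intro b hb
    refine Subgroup.closure_le P |>.2 ?_ hb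
    rintro b ⟨g, hg, i, hi, rfl⟩
    rcases eq_or_lt_of_le (Nat.le_sub_one_of_lt hi) with hieq | hilt
    · rw [hieq]; exact hQ g hg
    · -- i < s - 1 : conjugate β_{i+1}(g) by β_0(ĝ) where ĝ(0) = x
      obtain ⟨a0, ha0G, ha0⟩ := hsf.1 [(0 : Fin m)] [x] rfl
      set a : TreeAut m := betaAut s 0 a0 with ha_def
      have haB : a ∈ basilica s G := Subgroup.subset_closure ⟨a0, ha0G, 0, hs, rfl⟩
      have halab : a.label [] 0 = x := by
        rw [betaAut_label_nil_zero]
        rw [TreeAut.apply_singleton] at ha0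
        exact List.head_eq_of_cons_eq ha0
      set c0 : TreeAut m := betaAut s (i + 1) g with hc0_def
      have hc0B : c0 ∈ basilica s G :=
        Subgroup.subset_closure ⟨g, hg, i + 1, by omega, rfl⟩
      have hc0l : c0.label [] = 1 := betaAut_label_nil_pos s (Nat.succ_ne_zero i) g
      have hc0sec : ∀ z : Fin m, c0.sec [z] = if z = 0 then betaAut s i g else 1 := by
        intro z
        rw [hc0_def, betaAut_sec_pos s (Nat.succ_ne_zero i) g z]
        simp only [Nat.add_sub_cancel, Nat.succ_sub_one]
      set q : TreeAut m := a0.sec [(0 : Fin m)] with hq_def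
      have hqG : q ∈ G := hss a0 ha0G [0]
      have haq : a.sec [(0 : Fin m)] = betaAut s (s - 1) q := betaAut_sec_zero s a0 0
      -- the conjugate is in P with section β_{s-1}(q) β_i(g) β_{s-1}(q)⁻¹ at x
      have hconjP : betaAut s (s - 1) q * betaAut s i g * (betaAut s (s - 1) q)⁻¹ ∈ P := by
        refine ⟨a * c0 * a⁻¹,
          (basilica s G).mul_mem ((basilica s G).mul_mem haB hc0B)
            ((basilica s G).inv_mem haB), conj_label_nil a c0 hc0l, ?_, ?_⟩
        · have := conj_sec a c0 hc0l 0
          rw [halab] at this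
          rw [this, hc0sec, if_pos rfl, haq]
        · intro y hy
          set z : Fin m := (a.label [])⁻¹ y with hz_def
          have hyz : a.label [] z = y := by rw [hz_def]; simp
          have hz0 : z ≠ 0 := by
            intro h
            rw [h] at hyz
            exact hy (by rw [← hyz, halab])
          have := conj_sec a c0 hc0l z
          rw [hyz] at this
          rw [this, hc0sec, if_neg hz0]
          exact ⟨1, G.one_mem, by rw [betaAut_one, mul_one, mul_inv_cancel]⟩
      have h1 : betaAut s (s - 1) q ∈ P := hQ q hqG
      have h2 : betaAut s i g
          = (betaAut s (s - 1) q)⁻¹ *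
            (betaAut s (s - 1) q * betaAut s i g * (betaAut s (s - 1) q)⁻¹) *
            betaAut s (s - 1) q := by group
      rw [h2]
      exact P.mul_mem (P.mul_mem (P.inv_mem h1) hconjP) h1
  exact fun b hb => hgen b hb

end Key


section Emb

variable {m : ℕ}

/-- The embedding `h ↦ ψ₁⁻¹(1, …, h, …, 1)` (with `h` in coordinate `x`), as a hom. -/
def embAtHom (x : Fin m) : TreeAut m →* TreeAut m where
  toFun h := TreeAut.cons 1 (fun y => if y = x then h else 1)
  map_one' := by
    show TreeAut.cons 1 (fun y : Fin m => if y = x then (1 : TreeAut m) else 1) = 1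
    have : (fun y : Fin m => if y = x then (1 : TreeAut m) else 1) = fun _ => 1 := by
      funext y; split_ifs <;> rfl
    rw [this, TreeAut.cons_one_one]
  map_mul' h₁ h₂ := by
    show TreeAut.cons 1 (fun y : Fin m => if y = x then h₁ * h₂ else 1) = _
    rw [TreeAut.cons_one_mul]
    congr 1
    funext y
    split_ifs <;> simp

lemma embAtHom_sec (x : Fin m) (h : TreeAut m) (y : Fin m) :
    (embAtHom x h).sec [y] = if y = x then h else 1 := rfl

lemma embAtHom_label_nil (x : Fin m) (h : TreeAut m) : (embAtHom x h).label [] = 1 := rfl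

lemma cons_one_mem_of_embAt {K : Subgroup (TreeAut m)} (f : Fin m → TreeAut m)
    (hK : ∀ x : Fin m, embAtHom x (f x) ∈ K) : TreeAut.cons 1 f ∈ K := by
  classical
  have key : ∀ T : Finset (Fin m),
      TreeAut.cons 1 (fun y => if y ∈ T then f y else 1) ∈ K := by
    intro T
    induction T using Finset.induction_on with
    | empty =>
        have : (fun y : Fin m => if y ∈ (∅ : Finset (Fin m)) then f y else 1)
            = fun _ => 1 := by
          funext y; simp
        rw [this, TreeAut.cons_one_one]
        exact K.one_mem
    | insert _ _ ha ih =>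
        rename_i a T
        have hsplit : TreeAut.cons 1 (fun y => if y ∈ insert a T then f y else 1)
            = embAtHom a (f a) * TreeAut.cons 1 (fun y => if y ∈ T then f y else 1) := by
          show _ = TreeAut.cons 1 _ * TreeAut.cons 1 _
          rw [TreeAut.cons_one_mul]
          congr 1
          funext y
          by_cases hya : y = a
          · subst hya
            simp [ha]
          · simp [hya]
        rw [hsplit]
        exact K.mul_mem (hK a) ih
  have : (fun y : Fin m => if y ∈ (Finset.univ : Finset (Fin m)) then f y else 1) = f := by
    funext y; simp
  have h := key Finset.univ
  rwa [this] at h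

end Emb

/-- Let `G ≤ Aut(T)` be self-similar and strongly fractal, `B = Bas_s(G)`,
and let `ω` be a group word that is a law in `G` but not a law in `B`. Then `B` is weakly
regular branch over the verbal subgroup `ω(B)`. -/
theorem basilica_weaklyRegularBranch_verbal {m : ℕ} [NeZero m] (hm : 2 ≤ m)
    (G : Subgroup (TreeAut m)) (hss : SelfSimilar G) (hsf : StronglyFractal G)
    (s : ℕ) (hs : 1 ≤ s) (k : ℕ) (w : FreeGroup (Fin k))
    (hlawG : ∀ f : Fin k → TreeAut m, (∀ t, f t ∈ G) → FreeGroup.lift f w = 1)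
    (hnotlawB : ¬ ∀ f : Fin k → TreeAut m, (∀ t, f t ∈ basilica s G) →
      FreeGroup.lift f w = 1) :
    WeaklyRegularBranchOver (basilica s G)
      (Subgroup.closure {x | ∃ f : Fin k → TreeAut m,
        (∀ t, f t ∈ basilica s G) ∧ x = FreeGroup.lift f w}) := by
  classical
  set B := basilica s G with hB
  set Sset : Set (TreeAut m) := {x | ∃ f : Fin k → TreeAut m,
    (∀ t, f t ∈ basilica s G) ∧ x = FreeGroup.lift f w} with hSset
  set K := Subgroup.closure Sset with hK
  -- auxiliary: values of w on β_{s-1}(G) are trivial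
  have hlawQ : ∀ f : Fin k → TreeAut m,
      (∀ t, ∃ q ∈ G, f t = betaAut s (s - 1) q) → FreeGroup.lift f w = 1 := by
    intro f hf
    choose q hqG hqe using hf
    have hfq : f = fun t => betaHom s (s - 1) (q t) := by
      funext t; rw [hqe t]; rfl
    rw [hfq, ← hom_free_lift (betaHom s (s - 1)) q w, hlawG q hqG, map_one]
  constructor
  · -- K ≤ B
    rw [hK]
    refine (Subgroup.closure_le B).2 ?_
    rintro b ⟨f, hf, rfl⟩
    exact free_lift_mem B f hf w
  · -- branching
    have hemb : ∀ (x : Fin m) (h : TreeAut m), h ∈ K → embAtHom x h ∈ K := by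
      intro x
      have : K ≤ K.comap (embAtHom x) := by
        rw [hK]
        refine (Subgroup.closure_le _).2 ?_
        rintro h ⟨F, hF, rfl⟩
        choose c hcB hcl hcs hco using
          fun t => exists_good_section G hss hsf s hs x (F t) (hF t)
        set cc : Fin k → rootTriv m := fun t => ⟨c t, hcl t⟩ with hcc
        have hsecd : ∀ y : Fin m, (FreeGroup.lift c w).sec [y]
            = FreeGroup.lift (fun t => (c t).sec [y]) w := by
          intro y
          have h1 : FreeGroup.lift c w = (rootTriv m).subtype (FreeGroup.lift cc w) := by
            rw [hom_free_lift]
            rfl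
          have h2 : secHom y (FreeGroup.lift cc w)
              = FreeGroup.lift (fun t => (c t).sec [y]) w := by
            rw [hom_free_lift]
            rfl
          rw [h1]
          exact h2
        have hdK : FreeGroup.lift c w ∈ K :=
          Subgroup.subset_closure ⟨c, fun t => hcB t, rfl⟩
        have hdl : (FreeGroup.lift c w).label [] = 1 :=
          free_lift_mem (rootTriv m) c (fun t => hcl t) w
        have heq : embAtHom x (FreeGroup.lift F w) = FreeGroup.lift c w := by
          apply TreeAut.eq_of_label_nil_sec
          · rw [embAtHom_label_nil, hdl]
          · intro y
            rw [embAtHom_sec, hsecd]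
            by_cases hyx : y = x
            · rw [if_pos hyx, hyx]
              have hcF : (fun t => (c t).sec [x]) = F := funext fun t => hcs t
              rw [hcF]
            · rw [if_neg hyx]
              exact (hlawQ _ (fun t => hco t y hyx)).symm
        show embAtHom x (FreeGroup.lift F w) ∈ K
        rw [heq]
        exact hdK
      intro h hh
      exact this hh
    intro f hf
    exact cons_one_mem_of_embAt f (fun x => hemb x (f x) (hf x))

end Basilica
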